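/- Let |x⟩ be a unit vector, |ψ⟩ = α|x⟩ + β|y⟩ with |y⟩ a unit vector orthogonal to |x⟩ and α, β real with α² + β² = 1, α ≠ 0. Define the Hamiltonian H = |x⟩⟨x| + |ψ⟩⟨ψ|. Then exp(−iHt)|ψ⟩ = e^{−it}·(cos(αt)·|ψ⟩ − i·sin(αt)·|x⟩); in particular at time t = π/(2α), exp(−iHt)|ψ⟩ is, up to a global phase, equal to |x⟩. -/

import Mathlib

open scoped InnerProductSpace
open Complex

lemma exp_apply_eig {E : Type*} [NormedAddCommGroup E] [NormedSpace ℂ E] [CompleteSpace E]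
    (A : E →L[ℂ] E) (v : E) (c : ℂ) (h : A v = c • v) :
    NormedSpace.exp A v = Complex.exp c • v := by
  have hpow : ∀ n : ℕ, (A ^ n) v = c ^ n • v := by
    intro n; induction n with
    | zero => simp
    | succ n ih =>
      rw [pow_succ, ContinuousLinearMap.mul_apply, h, map_smul, ih, smul_smul, pow_succ, mul_comm]
  have hs : Summable fun n : ℕ => ((Nat.factorial n : ℂ))⁻¹ • A ^ n := NormedSpace.expSeries_summable' A
  have key := (ContinuousLinearMap.apply ℂ E v).map_tsum hs
  rw [NormedSpace.exp_eq_tsum ℂ]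
  rw [show (∑' n : ℕ, ((Nat.factorial n : ℂ))⁻¹ • A ^ n) v = ContinuousLinearMap.apply ℂ E v (∑' n : ℕ, ((Nat.factorial n : ℂ))⁻¹ • A ^ n) from rfl, key]
  simp only [ContinuousLinearMap.apply_apply, ContinuousLinearMap.smul_apply, hpow, smul_smul]
  have hc : Summable fun n : ℕ => ((Nat.factorial n : ℂ))⁻¹ * c ^ n := by
    simpa [smul_eq_mul] using NormedSpace.expSeries_summable' (𝕂 := ℂ) c
  rw [Complex.exp_eq_exp_ℂ, NormedSpace.exp_eq_tsum ℂ, ← Summable.tsum_smul_const]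
  · simp [smul_smul]
  · exact hc

theorem grover_hamiltonian_evolution
    (x y : EuclideanSpace ℂ (Fin 2)) (hx : ‖x‖ = 1) (hy : ‖y‖ = 1)
    (hxy : ⟪x, y⟫_ℂ = 0)
    (α β : ℝ) (hαβ : α ^ 2 + β ^ 2 = 1) (hα : α ≠ 0)
    (ψ : EuclideanSpace ℂ (Fin 2)) (hψ : ψ = (α : ℂ) • x + (β : ℂ) • y)
    (H : EuclideanSpace ℂ (Fin 2) →L[ℂ] EuclideanSpace ℂ (Fin 2))
    (hH : ∀ v, H v = ⟪x, v⟫_ℂ • x + ⟪ψ, v⟫_ℂ • ψ) :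
    (∀ t : ℝ, (NormedSpace.exp ((-(Complex.I * t)) • H)) ψ
        = Complex.exp (-(Complex.I * t)) •
            ((Real.cos (α * t) : ℂ) • ψ - (Complex.I * Real.sin (α * t)) • x)) ∧
    ∃ c : ℂ, ‖c‖ = 1 ∧
      (NormedSpace.exp ((-(Complex.I * (Real.pi / (2 * α)))) • H)) ψ = c • x := by
  have hxx : ⟪x, x⟫_ℂ = 1 := by
    rw [inner_self_eq_norm_sq_to_K, hx]; norm_num
  have hyy : ⟪y, y⟫_ℂ = 1 := by
    rw [inner_self_eq_norm_sq_to_K, hy]; norm_num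
  have hyx : ⟪y, x⟫_ℂ = 0 := by
    rw [← inner_conj_symm, hxy, map_zero]
  have hxψ : ⟪x, ψ⟫_ℂ = (α : ℂ) := by
    rw [hψ, inner_add_right, inner_smul_right, inner_smul_right, hxx, hxy]; ring
  have hψx : ⟪ψ, x⟫_ℂ = (α : ℂ) := by
    rw [hψ, inner_add_left, inner_smul_left, inner_smul_left, hxx, hyx]
    simp [Complex.conj_ofReal]
  have hψψ : ⟪ψ, ψ⟫_ℂ = 1 := by
    rw [hψ, inner_add_right, inner_add_left, inner_add_left, inner_smul_left,
      inner_smul_left, inner_smul_left, inner_smul_left, inner_smul_right,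
      inner_smul_right, inner_smul_right, inner_smul_right, hxx, hyy, hxy, hyx]
    simp only [Complex.conj_ofReal]
    have : ((α:ℂ)^2 + (β:ℂ)^2 : ℂ) = 1 := by exact_mod_cast congrArg (Complex.ofReal) hαβ
    linear_combination this
  have hHu : H (ψ + x) = ((1 + α : ℂ)) • (ψ + x) := by
    rw [hH, inner_add_right, inner_add_right, hxψ, hxx, hψψ, hψx]
    module
  have hHw : H (ψ - x) = ((1 - α : ℂ)) • (ψ - x) := by
    rw [hH, inner_sub_right, inner_sub_right, hxψ, hxx, hψψ, hψx]
    module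
  have main : ∀ t : ℝ, (NormedSpace.exp ((-(Complex.I * t)) • H)) ψ
      = Complex.exp (-(Complex.I * t)) •
          ((Real.cos (α * t) : ℂ) • ψ - (Complex.I * Real.sin (α * t)) • x) := by
    intro t
    set A := (-(Complex.I * t)) • H with hA
    have hAu : A (ψ + x) = ((-(Complex.I * t)) * (1 + α)) • (ψ + x) := by
      rw [hA, ContinuousLinearMap.smul_apply, hHu, smul_smul]
    have hAw : A (ψ - x) = ((-(Complex.I * t)) * (1 - α)) • (ψ - x) := by
      rw [hA, ContinuousLinearMap.smul_apply, hHw, smul_smul]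
    have e1 := exp_apply_eig A (ψ + x) _ hAu
    have e2 := exp_apply_eig A (ψ - x) _ hAw
    have hψ2 : ψ = (1/2 : ℂ) • (ψ + x) + (1/2 : ℂ) • (ψ - x) := by module
    calc (NormedSpace.exp A) ψ
        = (1/2 : ℂ) • (NormedSpace.exp A) (ψ + x) + (1/2 : ℂ) • (NormedSpace.exp A) (ψ - x) := by
          conv_lhs => rw [hψ2]
          rw [map_add, map_smul, map_smul]
      _ = (1/2 : ℂ) • (Complex.exp ((-(Complex.I * t)) * (1 + α)) • (ψ + x))
          + (1/2 : ℂ) • (Complex.exp ((-(Complex.I * t)) * (1 - α)) • (ψ - x)) := by rw [e1, e2]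
      _ = Complex.exp (-(Complex.I * t)) •
          ((Real.cos (α * t) : ℂ) • ψ - (Complex.I * Real.sin (α * t)) • x) := by
          have h1 : Complex.exp ((-(Complex.I * t)) * (1 + α))
              = Complex.exp (-(Complex.I * t)) * ((Real.cos (α * t) : ℂ) - Real.sin (α * t) * Complex.I) := by
            rw [show ((-(Complex.I * t)) * (1 + α) : ℂ) = -(Complex.I * t) + (-(α * t) : ℝ) * Complex.I by push_cast; ring,
              Complex.exp_add, Complex.exp_mul_I]
            push_cast [Complex.cos_neg, Complex.sin_neg]
            ring
          have h2 : Complex.exp ((-(Complex.I * t)) * (1 - α))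
              = Complex.exp (-(Complex.I * t)) * ((Real.cos (α * t) : ℂ) + Real.sin (α * t) * Complex.I) := by
            rw [show ((-(Complex.I * t)) * (1 - α) : ℂ) = -(Complex.I * t) + ((α * t) : ℝ) * Complex.I by push_cast; ring,
              Complex.exp_add, Complex.exp_mul_I]
            push_cast
            ring
          rw [h1, h2]
          module
  have hcast : ((Real.pi / (2 * α) : ℝ) : ℂ) = (Real.pi : ℂ) / (2 * (α : ℂ)) := by push_cast; ring
  refine ⟨main, Complex.exp (-(Complex.I * ((Real.pi / (2 * α) : ℝ) : ℂ))) * (-Complex.I), ?_, ?_⟩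
  · have him : ((Real.pi : ℂ) / (2 * (α : ℂ))).im = 0 := by rw [← hcast]; exact Complex.ofReal_im _
    simp [Complex.norm_exp, him]
  · have h := main (Real.pi / (2 * α))
    rw [show α * (Real.pi / (2 * α)) = Real.pi / 2 by field_simp,
      Real.cos_pi_div_two, Real.sin_pi_div_two, hcast] at h
    rw [h, ← hcast]
    push_cast
    module
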